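/- Let X be a random variable with the exponential distribution of rate 1 (density e^{−x} on (0, ∞)) and let c ≥ 0. Then 𝔼[log₂(1 + c·X)] ≥ log₂(1 + c·e^{−γ}), where γ is the Euler–Mascheroni constant. -/

import Mathlib

open Real MeasureTheory Set Filter

lemma mellinAux : MellinConvergent (fun t => Real.log t • (Real.exp (-t) : ℂ)) 1 ∧
    HasDerivAt (mellin fun x => (Real.exp (-x) : ℂ))
      (mellin (fun t => Real.log t • (Real.exp (-t) : ℂ)) 1) 1 := by
  refine mellin_hasDerivAt_of_isBigO_rpow (a := 2) (b := 0) ?_ ?_ (by norm_num) ?_ (by norm_num)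
  · refine (Continuous.continuousOn ?_).locallyIntegrableOn measurableSet_Ioi
    exact Complex.continuous_ofReal.comp (Real.continuous_exp.comp continuous_neg)
  · rw [← Asymptotics.isBigO_norm_left]
    simp_rw [Complex.norm_real,
      Asymptotics.isBigO_norm_left]
    simpa only [neg_one_mul] using (isLittleO_exp_neg_mul_rpow_atTop zero_lt_one _).isBigO
  · simp_rw [neg_zero, Real.rpow_zero]
    refine Asymptotics.isBigO_const_of_tendsto (?_ : Tendsto _ _ (nhds (1 : ℂ))) one_ne_zero
    rw [(by simp : (1 : ℂ) = Real.exp (-0))]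
    exact (Complex.continuous_ofReal.comp
      (Real.continuous_exp.comp continuous_neg)).continuousWithinAt

lemma integrableOn_exp_neg_log : IntegrableOn (fun x => Real.exp (-x) * Real.log x) (Ioi 0) := by
  have h := mellinAux.1
  unfold MellinConvergent at h
  have h2 : IntegrableOn (fun t : ℝ => ((Real.log t * Real.exp (-t) : ℝ) : ℂ)) (Ioi 0) := by
    refine h.congr (Filter.Eventually.of_forall fun t => ?_)
    simp [Complex.cpow_zero, Complex.ofReal_mul]
  have h3 := h2.re
  exact h3.congr (Filter.Eventually.of_forall fun t => by
    show RCLike.re ((Real.log t * Real.exp (-t) : ℝ) : ℂ) = _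
    rw [show RCLike.re ((Real.log t * Real.exp (-t) : ℝ) : ℂ) = Real.log t * Real.exp (-t)
      from Complex.ofReal_re _, mul_comm])

lemma integral_exp_neg_log :
    ∫ x in Ioi (0:ℝ), Real.exp (-x) * Real.log x = -Real.eulerMascheroniConstant := by
  -- mellin deriv at 1 equals complex integral of log t * exp(-t)
  have hd := mellinAux.2
  have hint : mellin (fun t => Real.log t • (Real.exp (-t) : ℂ)) 1
      = ((∫ x in Ioi (0:ℝ), Real.exp (-x) * Real.log x : ℝ) : ℂ) := by
    unfold mellin
    have e1 : ∫ (t : ℝ) in Ioi 0, (t:ℂ) ^ ((1:ℂ) - 1) • (Real.log t • (Real.exp (-t):ℂ))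
        = ∫ (t : ℝ) in Ioi 0, ((Real.exp (-t) * Real.log t : ℝ) : ℂ) := by
      refine integral_congr_ae (Filter.Eventually.of_forall fun t => ?_)
      simp [Complex.cpow_zero, Complex.ofReal_mul, mul_comm]
    rw [e1]
    exact integral_ofReal
  -- mellin of exp(-x) is GammaIntegral = Gamma near 1
  have hGI : mellin (fun x => (Real.exp (-x) : ℂ)) = Complex.GammaIntegral := by
    funext s; simp only [Complex.GammaIntegral_eq_mellin]
  have hd2 : HasDerivAt Complex.GammaIntegral
      ((∫ x in Ioi (0:ℝ), Real.exp (-x) * Real.log x : ℝ) : ℂ) 1 := by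
    rw [← hGI, ← hint]; exact hd
  have hEq : Complex.Gamma =ᶠ[nhds (1:ℂ)] Complex.GammaIntegral := by
    have hopen : IsOpen {s : ℂ | 0 < s.re} := isOpen_lt continuous_const Complex.continuous_re
    filter_upwards [hopen.mem_nhds (by norm_num : (0:ℝ) < (1:ℂ).re)] with s hs
    exact Complex.Gamma_eq_integral hs
  have hd3 : HasDerivAt Complex.Gamma
      ((∫ x in Ioi (0:ℝ), Real.exp (-x) * Real.log x : ℝ) : ℂ) 1 :=
    hd2.congr_of_eventuallyEq hEq
  have hd4 : HasDerivAt (fun x : ℝ => (Complex.Gamma x).re)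
      (((∫ x in Ioi (0:ℝ), Real.exp (-x) * Real.log x : ℝ) : ℂ)).re 1 := by
    exact HasDerivAt.real_of_complex (by exact_mod_cast hd3)
  have hre : (fun x : ℝ => (Complex.Gamma x).re) = Real.Gamma := by
    funext x; rw [Complex.Gamma_ofReal]; exact Complex.ofReal_re _
  have hd5 : HasDerivAt Real.Gamma
      (∫ x in Ioi (0:ℝ), Real.exp (-x) * Real.log x) 1 := by
    rw [← hre]
    simpa using hd4
  exact hd5.unique Real.hasDerivAt_Gamma_one

lemma pointwise_tangent (c : ℝ) (hc : 0 ≤ c) {a x : ℝ} (ha : 0 < a) (hx : 0 < x) :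
    Real.log (1 + c * a) + c * a / (1 + c * a) * (Real.log x - Real.log a)
      ≤ Real.log (1 + c * x) := by
  set m := c * a / (1 + c * a) with hm
  have h1ca : 0 < 1 + c * a := by positivity
  have hm0 : 0 ≤ m := by positivity
  have hm1 : m ≤ 1 := by
    rw [hm, div_le_one h1ca]; linarith
  have ht : 0 < x / a := by positivity
  have amgm := Real.geom_mean_le_arith_mean2_weighted (by linarith : (0:ℝ) ≤ 1 - m) hm0
    zero_le_one ht.le (by ring : (1 - m) + m = 1)
  rw [Real.one_rpow, one_mul, mul_one] at amgm
  have hpos : 0 < (1 - m) + m * (x / a) :=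
    lt_of_lt_of_le (Real.rpow_pos_of_pos ht m) amgm
  have hlog : m * Real.log (x / a) ≤ Real.log ((1 - m) + m * (x / a)) := by
    rw [← Real.log_rpow ht]
    exact Real.log_le_log (Real.rpow_pos_of_pos ht m) amgm
  have hid : 1 + c * x = (1 + c * a) * ((1 - m) + m * (x / a)) := by
    rw [hm]; field_simp; ring
  rw [hid, Real.log_mul h1ca.ne' hpos.ne', ← Real.log_div hx.ne' ha.ne']
  exact add_le_add (le_refl _) hlog

/-- Proposition 1: for X ~ Exponential(1) (density e^{−x} on (0,∞)) and c ≥ 0,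
𝔼[log₂(1 + c·X)] ≥ log₂(1 + c·e^{−γ}). -/
theorem stmt_8 (c : ℝ) (hc : 0 ≤ c) :
    Real.logb 2 (1 + c * Real.exp (-Real.eulerMascheroniConstant)) ≤
      ∫ x in Set.Ioi (0:ℝ), Real.exp (-x) * Real.logb 2 (1 + c * x) := by
  set a : ℝ := Real.exp (-Real.eulerMascheroniConstant) with ha_def
  have ha : 0 < a := Real.exp_pos _
  have hloga : Real.log a = -Real.eulerMascheroniConstant := Real.log_exp _
  set m := c * a / (1 + c * a) with hm
  have h1ca : 0 < 1 + c * a := by positivity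
  -- integrability facts
  have hI1 : IntegrableOn (fun x : ℝ => Real.exp (-x)) (Ioi 0) := by
    simpa using exp_neg_integrableOn_Ioi 0 (by norm_num : (0:ℝ) < 1)
  have hI2 := integrableOn_exp_neg_log
  have hI3 : IntegrableOn (fun x : ℝ => Real.exp (-x) * x) (Ioi 0) := by
    have := Real.GammaIntegral_convergent (by norm_num : (0:ℝ) < 2)
    refine this.congr (Filter.Eventually.of_forall fun x => ?_)
    norm_num
  have hfm : AEStronglyMeasurable (fun x : ℝ => Real.exp (-x) * Real.log (1 + c * x))
      (volume.restrict (Ioi 0)) := by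
    refine ContinuousOn.aestronglyMeasurable ?_ measurableSet_Ioi
    refine ((Real.continuous_exp.comp continuous_neg).continuousOn).mul ?_
    refine Real.continuousOn_log.comp
      (continuousOn_const.add (continuous_const.mul continuous_id).continuousOn) ?_
    intro x hx
    have : (0:ℝ) < 1 + c * x := by
      have := mul_nonneg hc (le_of_lt hx)
      simp only [mem_Ioi] at hx; positivity
    simpa using this.ne'
  have hIf : IntegrableOn (fun x : ℝ => Real.exp (-x) * Real.log (1 + c * x)) (Ioi 0) := by
    refine Integrable.mono' (hI3.const_mul c) hfm ?_
    rw [ae_restrict_iff' measurableSet_Ioi]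
    refine Filter.Eventually.of_forall fun x hx => ?_
    simp only [mem_Ioi] at hx
    have hcx : 0 ≤ c * x := mul_nonneg hc hx.le
    have h1 : 0 ≤ Real.log (1 + c * x) := Real.log_nonneg (by linarith)
    have h2 : Real.log (1 + c * x) ≤ c * x := by
      have := Real.log_le_sub_one_of_pos (by linarith : (0:ℝ) < 1 + c * x)
      linarith
    rw [Real.norm_eq_abs, abs_of_nonneg (mul_nonneg (Real.exp_pos _).le h1)]
    calc Real.exp (-x) * Real.log (1 + c * x) ≤ Real.exp (-x) * (c * x) := by
          exact mul_le_mul_of_nonneg_left h2 (Real.exp_pos _).le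
      _ = c * (Real.exp (-x) * x) := by ring
  -- lower bound function
  set L : ℝ := Real.log (1 + c * a) with hL
  have hIg : IntegrableOn
      (fun x : ℝ => (L - m * Real.log a) * Real.exp (-x) + m * (Real.exp (-x) * Real.log x))
      (Ioi 0) := (hI1.const_mul _).add (hI2.const_mul _)
  have hmono : ∫ x in Ioi (0:ℝ),
        ((L - m * Real.log a) * Real.exp (-x) + m * (Real.exp (-x) * Real.log x))
      ≤ ∫ x in Ioi (0:ℝ), Real.exp (-x) * Real.log (1 + c * x) := by
    refine setIntegral_mono_on hIg hIf measurableSet_Ioi fun x hx => ?_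
    simp only [mem_Ioi] at hx
    have hpt := pointwise_tangent c hc ha hx
    have := mul_le_mul_of_nonneg_left hpt (Real.exp_pos (-x)).le
    calc (L - m * Real.log a) * Real.exp (-x) + m * (Real.exp (-x) * Real.log x)
        = Real.exp (-x) * (L + m * (Real.log x - Real.log a)) := by ring
      _ ≤ Real.exp (-x) * Real.log (1 + c * x) := this
  have hval : ∫ x in Ioi (0:ℝ),
      ((L - m * Real.log a) * Real.exp (-x) + m * (Real.exp (-x) * Real.log x)) = L := by
    rw [integral_add (hI1.const_mul _) (hI2.const_mul _), integral_const_mul, integral_const_mul,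
      integral_exp_neg_Ioi_zero, integral_exp_neg_log, hloga]
    ring
  have main : L ≤ ∫ x in Ioi (0:ℝ), Real.exp (-x) * Real.log (1 + c * x) := hval ▸ hmono
  -- convert to logb
  have h2 : (0:ℝ) < Real.log 2 := Real.log_pos (by norm_num)
  have : ∫ x in Ioi (0:ℝ), Real.exp (-x) * Real.logb 2 (1 + c * x)
      = (∫ x in Ioi (0:ℝ), Real.exp (-x) * Real.log (1 + c * x)) / Real.log 2 := by
    simp_rw [← Real.log_div_log, ← mul_div_assoc]
    exact integral_div _ _
  rw [this, show Real.logb 2 (1 + c * a) = L / Real.log 2 from (Real.log_div_log).symm]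
  gcongr
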